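/- arXiv:0902.1321 — 4 statements merged into one kernel-verified Lean document; each statement's English description precedes it below -/
import Mathlib

section
/- If f_1, ..., f_d are polynomials each of degree at most n-1, then their Wronskian Wr(f_1,...,f_d)(z) has degree at most d(n-d). -/
open Polynomial

/-- The Wronskian of `d` polynomials. -/
noncomputable def wronskian {F : Type*} [Field F] (d : ℕ) (f : Fin d → Polynomial F) :
    Polynomial F :=
  Matrix.det (Matrix.of fun i j : Fin d => (fun p => Polynomial.derivative p)^[i.val] (f j))

/-- Any finset of naturals of cardinality `c` has sum at least `0 + 1 + ⋯ + (c-1)`. -/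
lemma sum_range_card_le_sum (S : Finset ℕ) : ∑ i ∈ Finset.range S.card, i ≤ ∑ x ∈ S, x := by
  induction S using Finset.strongInduction with
  | _ s ih =>
    rcases s.eq_empty_or_nonempty with rfl | hs
    · simp
    · have hmem : s.max' hs ∈ s := s.max'_mem hs
      set m := s.max' hs
      have hcardm : s.card ≤ m + 1 := by
        simpa using Finset.card_le_card
          (fun x hx => Finset.mem_range.mpr (Nat.lt_succ_of_le (Finset.le_max' s x hx)))
      have hcard1 : 1 ≤ s.card := Finset.card_pos.mpr hs
      have hih := ih (s.erase m) (Finset.erase_ssubset hmem)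
      rw [Finset.card_erase_of_mem hmem] at hih
      calc ∑ i ∈ Finset.range s.card, i
          = ∑ i ∈ Finset.range (s.card - 1), i + (s.card - 1) := by
            conv_lhs => rw [show s.card = (s.card - 1) + 1 by omega]
            rw [Finset.sum_range_succ]
        _ ≤ ∑ x ∈ s.erase m, x + (s.card - 1) := Nat.add_le_add_right hih _
        _ ≤ ∑ x ∈ s.erase m, x + m := Nat.add_le_add_left (by omega) _
        _ = ∑ x ∈ s, x := Finset.sum_erase_add s _ hmem

/-- Lower bound for sums of injective maps into ℕ. -/
lemma sum_range_le_sum_inj {d : ℕ} (g : Fin d → ℕ) (hg : Function.Injective g) :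
    ∑ i ∈ Finset.range d, i ≤ ∑ x : Fin d, g x := by
  have himg : (Finset.image g Finset.univ).card = d := by
    rw [Finset.card_image_of_injective _ hg, Finset.card_univ, Fintype.card_fin]
  have := sum_range_card_le_sum (Finset.image g Finset.univ)
  rw [himg, Finset.sum_image (fun x _ y _ h => hg h)] at this
  exact this

lemma arith_aux (A B Z S T Tt P : ℕ) (h1 : S + Tt = A) (h2 : T ≤ Tt) (h3 : 2 * T = B)
    (h4 : P + T = S) (hX : A = B + Z) : P ≤ Z := by omega

/-- Key combinatorial bound. -/
lemma sum_sub_le {d k : ℕ} (hd : 0 < d) (s : Fin d → ℕ) (hinj : Function.Injective s)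
    (hs : ∀ x, s x < d + k + 1) (hles : ∀ x : Fin d, (x : ℕ) ≤ s x) :
    ∑ x : Fin d, (s x - (x : ℕ)) ≤ d * (k + 1) := by
  set t : Fin d → ℕ := fun x => (d + k) - s x with ht
  have hsle : ∀ x, s x ≤ d + k := fun x => by have := hs x; omega
  have htinj : Function.Injective t := by
    intro x y hxy
    apply hinj
    have h1 := hsle x; have h2 := hsle y
    simp only [ht] at hxy
    omega
  have h1 : (∑ x : Fin d, s x) + (∑ x : Fin d, t x) = d * (d + k) := by
    rw [← Finset.sum_add_distrib]
    have : ∀ x : Fin d, s x + t x = d + k := fun x => by have := hsle x; simp only [ht]; omega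
    simp only [this, Finset.sum_const, Finset.card_univ, Fintype.card_fin, smul_eq_mul]
  have h2 : ∑ i ∈ Finset.range d, i ≤ ∑ x : Fin d, t x := sum_range_le_sum_inj t htinj
  have h3 : 2 * ∑ i ∈ Finset.range d, i = d * (d - 1) := by
    rw [mul_comm, Finset.sum_range_id_mul_two]
  have h4 : (∑ x : Fin d, (s x - (x : ℕ))) + (∑ x : Fin d, (x : ℕ)) = ∑ x : Fin d, s x := by
    rw [← Finset.sum_add_distrib]
    exact Finset.sum_congr rfl fun x _ => by have := hles x; omega
  have hT : ∑ x : Fin d, (x : ℕ) = ∑ i ∈ Finset.range d, i :=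
    Fin.sum_univ_eq_sum_range (fun i => i) d
  have hX : d * (d + k) = d * (d - 1) + d * (k + 1) := by
    obtain ⟨e, rfl⟩ : ∃ e, d = e + 1 := ⟨d - 1, by omega⟩
    simp only [Nat.add_sub_cancel]
    ring
  rw [hT] at h4
  exact arith_aux (d * (d + k)) (d * (d - 1)) (d * (k + 1)) _ _ _ _ h1 h2 h3 h4 hX

/-- The Wronskian as an `F`-multilinear map. -/
noncomputable def wrMap (F : Type*) [Field F] (d : ℕ) :
    MultilinearMap F (fun _ : Fin d => Polynomial F) (Polynomial F) :=
  (((Matrix.detRowAlternating :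
      (Fin d → Polynomial F) [⋀^Fin d]→ₗ[Polynomial F] Polynomial F)).toMultilinearMap.restrictScalars
        F).compLinearMap
    (fun _ => LinearMap.pi fun i : Fin d =>
      ((Polynomial.derivative : Polynomial F →ₗ[F] Polynomial F) ^ (i : ℕ)))

lemma wrMap_apply {F : Type*} [Field F] (d : ℕ) (f : Fin d → Polynomial F) :
    wrMap F d f
      = Matrix.det (Matrix.of fun j i : Fin d =>
          (fun p => Polynomial.derivative p)^[(i : ℕ)] (f j)) := by
  have h : (fun j => (LinearMap.pi fun i : Fin d =>
        ((Polynomial.derivative : Polynomial F →ₗ[F] Polynomial F) ^ (i : ℕ))) (f j))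
      = fun j i : Fin d => (fun p => Polynomial.derivative p)^[(i : ℕ)] (f j) := by
    funext j i
    simp [Module.End.pow_apply]
  simp only [wrMap, MultilinearMap.compLinearMap_apply, MultilinearMap.coe_restrictScalars,
    AlternatingMap.coe_multilinearMap]
  rw [h]
  rfl

lemma wronskian_eq_wrMap {F : Type*} [Field F] (d : ℕ) (f : Fin d → Polynomial F) :
    _root_.wronskian d f = wrMap F d f := by
  rw [wrMap_apply, _root_.wronskian, ← Matrix.det_transpose]
  rfl

lemma degree_iterate_derivative_X_pow_le {F : Type*} [Field F] (e i : ℕ) :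
    (Polynomial.derivative^[i] ((X : Polynomial F) ^ e)).degree ≤ ((e - i : ℕ) : WithBot ℕ) := by
  rw [Polynomial.iterate_derivative_X_pow_eq_smul]
  exact (degree_smul_le _ _).trans (degree_X_pow_le _)

lemma iterate_derivative_X_pow_eq_zero {F : Type*} [Field F] {e i : ℕ} (h : e < i) :
    Polynomial.derivative^[i] ((X : Polynomial F) ^ e) = 0 := by
  rw [Polynomial.iterate_derivative_X_pow_eq_smul, Nat.descFactorial_of_lt h]
  simp

/-- Degree bound for the Wronskian of monomials. -/
lemma degree_wrMap_monomial {F : Type*} [Field F] (d k : ℕ) (hd : 0 < d) (r : Fin d → ℕ)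
    (hr : ∀ j, r j < d + k + 1) :
    (wrMap F d fun j => (X : Polynomial F) ^ (r j)).degree
      ≤ ((d * (k + 1) : ℕ) : WithBot ℕ) := by
  rw [wrMap_apply]
  by_cases hinj : Function.Injective r
  · rw [Matrix.det_apply']
    refine (degree_sum_le _ _).trans (Finset.sup_le fun σ _ => ?_)
    have hsign : ∀ p : Polynomial F,
        (((Equiv.Perm.sign σ : ℤ) : Polynomial F) * p).degree ≤ p.degree := by
      intro p
      rcases Int.units_eq_one_or (Equiv.Perm.sign σ) with h | h <;> rw [h]
      · simp
      · simp [neg_mul]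
    refine (hsign _).trans ?_
    by_cases hσ : ∀ x : Fin d, (x : ℕ) ≤ r (σ x)
    · refine (degree_prod_le _ _).trans ?_
      have hstep : ∀ x : Fin d, ((Matrix.of fun j i : Fin d =>
            (fun p => Polynomial.derivative p)^[(i : ℕ)] ((X : Polynomial F) ^ (r j))) (σ x) x).degree
            ≤ ((r (σ x) - (x : ℕ) : ℕ) : WithBot ℕ) := by
        intro x
        exact degree_iterate_derivative_X_pow_le (r (σ x)) (x : ℕ)
      refine (Finset.sum_le_sum fun x _ => hstep x).trans ?_
      rw [← Nat.cast_sum]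
      have key : ∑ x : Fin d, (r (σ x) - (x : ℕ)) ≤ d * (k + 1) :=
        sum_sub_le hd (r ∘ σ) (hinj.comp σ.injective) (fun x => hr (σ x)) hσ
      exact_mod_cast key
    · push_neg at hσ
      obtain ⟨x, hx⟩ := hσ
      have : (∏ i : Fin d, (Matrix.of fun j i : Fin d =>
          (fun p => Polynomial.derivative p)^[(i : ℕ)] ((X : Polynomial F) ^ (r j))) (σ i) i) = 0 := by
        refine Finset.prod_eq_zero (Finset.mem_univ x) ?_
        simp only [Matrix.of_apply]
        exact iterate_derivative_X_pow_eq_zero hx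
      rw [this]
      simp
  · rw [Function.not_injective_iff] at hinj
    obtain ⟨a, b, hab, hne⟩ := hinj
    rw [Matrix.det_zero_of_row_eq hne (by funext i; simp [hab])]
    simp

/-- If `f 1, ..., f d` each have degree at most `n-1`, then their Wronskian has degree
at most `d * (n - d)`. -/
theorem degree_wronskian_le {F : Type*} [Field F] [CharZero F] (d n : ℕ)
    (hd : 0 < d) (hdn : d < n) (f : Fin d → Polynomial F)
    (hf : ∀ i, (f i).degree ≤ ((n - 1 : ℕ) : WithBot ℕ)) :
    (wronskian d f).degree ≤ ((d * (n - d) : ℕ) : WithBot ℕ) := by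
  obtain ⟨k, rfl⟩ : ∃ k, n = d + k + 1 := ⟨n - d - 1, by omega⟩
  have hnd : d + k + 1 - d = k + 1 := by omega
  rw [hnd]
  rw [wronskian_eq_wrMap]
  have hdeg : ∀ j, (f j).natDegree < d + k + 1 := by
    intro j
    have := natDegree_le_iff_degree_le.2 (hf j)
    omega
  have hexp : f = fun j => ∑ e ∈ Finset.range (d + k + 1), monomial e ((f j).coeff e) := by
    funext j
    exact (f j).as_sum_range' _ (hdeg j)
  rw [hexp, (wrMap F d).map_sum_finset (fun j e => monomial e ((f j).coeff e))
    (fun _ => Finset.range (d + k + 1))]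
  refine (degree_sum_le _ _).trans (Finset.sup_le fun r hr => ?_)
  have hmem : ∀ j, r j < d + k + 1 := by
    intro j
    have := (Fintype.mem_piFinset.mp hr) j
    simpa [Finset.mem_range] using this
  have hmono : (fun j => monomial (r j) ((f j).coeff (r j)))
      = fun j => ((f j).coeff (r j)) • (X : Polynomial F) ^ (r j) := by
    funext j
    rw [smul_X_eq_monomial]
  rw [hmono, (wrMap F d).map_smul_univ]
  exact (degree_smul_le _ _).trans (degree_wrMap_monomial d k hd r hmem)
end

section
/- Let B be the d×n matrix over F[z] with entries B_{ij} = (d/dz)^{i-1} z^{j-1}. For a partition λ fitting in the d×(n-d) rectangle with associated column set J(λ) = {j + λ_{d+1-j} : 1 ≤ j ≤ d}, the maximal minor of B with columns J(λ) equals q_λ · z^{|λ|}, where q_λ = Π_{i<j}(k_j - k_i) with k_j = j + λ_{d+1-j}, and |λ| = λ_1 + ... + λ_d. -/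
open Polynomial

/-- A partition fitting in the `d × (n-d)` rectangle. -/
def RectPartition (d n : ℕ) :=
  {l : Fin d → ℕ // (∀ i j : Fin d, i ≤ j → l j ≤ l i) ∧ ∀ i, l i ≤ n - d}

/-- `k_j = j + λ_{d+1-j}` as an integer. -/
def kval {d n : ℕ} (l : RectPartition d n) (i : Fin d) : ℤ :=
  (i.val + 1 + l.1 i.rev : ℕ)

/-- The Vandermonde quantity `q_λ = ∏_{1 ≤ i < j ≤ d} (k_j - k_i)`. -/
def qval {d n : ℕ} (l : RectPartition d n) : ℤ :=
  ∏ p ∈ Finset.univ.filter (fun p : Fin d × Fin d => p.1 < p.2), (kval l p.2 - kval l p.1)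

lemma pair_prod_eq {d : ℕ} (f : Fin d → Fin d → ℤ) :
    ∏ p ∈ Finset.univ.filter (fun p : Fin d × Fin d => p.1 < p.2), f p.1 p.2
      = ∏ i : Fin d, ∏ j ∈ Finset.Ioi i, f i j := by
  rw [Finset.prod_filter, ← Finset.univ_product_univ, Finset.prod_product]
  refine Finset.prod_congr rfl fun i _ => ?_
  rw [← Finset.prod_filter]
  refine Finset.prod_congr ?_ fun j _ => rfl
  ext j; simp

/-- The maximal minor with columns `J(λ)` of the matrix `B` with `B i j = (d/dz)^i z^j`
(indices `0`-based) equals `q_λ · z^{|λ|}`.  Here `c : Fin d → Fin n` selects the columns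
`J(λ)`, i.e. `(c i).val = k_{i+1} - 1 = i + λ_{d-i}`. -/
theorem minor_of_derivative_matrix {F : Type*} [Field F] [CharZero F] (d n : ℕ)
    (hd : 0 < d) (hdn : d < n) (l : RectPartition d n) (c : Fin d → Fin n)
    (hc : ∀ i : Fin d, (c i).val = i.val + l.1 i.rev) :
    (Matrix.of fun i i' : Fin d =>
        (fun p => Polynomial.derivative p)^[i.val] ((Polynomial.X : Polynomial F) ^ (c i').val)).det
      = Polynomial.C ((qval l : ℤ) : F) * Polynomial.X ^ (∑ i, l.1 i) := by

  classical
  set a : Matrix (Fin d) (Fin d) F :=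
    Matrix.of (fun i j : Fin d => ((c j).val.descFactorial i.val : F)) with ha
  -- scalar determinant
  have hdet_a : a.det = ((qval l : ℤ) : F) := by
    have hZ : (Matrix.of (fun i j : Fin d => ((c j).val.descFactorial i.val : ℤ))).det
        = qval l := by
      have h1 : (Matrix.of (fun i j : Fin d => ((c j).val.descFactorial i.val : ℤ)))
          = (Matrix.of (fun i j : Fin d =>
              ((descPochhammer ℤ j.val).eval (((c i).val : ℤ))))).transpose := by
        ext i j
        simp [Matrix.transpose_apply, descPochhammer_eval_eq_descFactorial]
      rw [h1, Matrix.det_transpose,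
        ← Matrix.det_eval_matrixOfPolynomials_eq_det_vandermonde
          (fun i : Fin d => ((c i).val : ℤ)) (fun j : Fin d => descPochhammer ℤ j.val)
          (fun i => descPochhammer_natDegree ℤ i.val) (fun i => monic_descPochhammer ℤ i.val),
        Matrix.det_vandermonde, qval, pair_prod_eq (fun i j => kval l j - kval l i)]
      refine Finset.prod_congr rfl fun i _ => Finset.prod_congr rfl fun j _ => ?_
      have : ∀ t : Fin d, kval l t = ((c t).val : ℤ) + 1 := by
        intro t; rw [kval, hc t]; push_cast; ring
      rw [this i, this j]; ring
    have haZ : a = (Matrix.of (fun i j : Fin d =>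
        ((c j).val.descFactorial i.val : ℤ))).map (Int.castRingHom F) := by
      ext i j
      simp [ha, Matrix.map_apply]
    rw [haZ, ← RingHom.mapMatrix_apply, ← RingHom.map_det, hZ]
    simp
  -- entry formula
  have hentry : ∀ i j : Fin d,
      (fun p => Polynomial.derivative p)^[i.val] ((Polynomial.X : Polynomial F) ^ (c j).val)
        = C (a i j) * X ^ ((c j).val - i.val) := by
    intro i j
    simp only [ha, Matrix.of_apply]
    exact iterate_derivative_X_pow_eq_C_mul (c j).val i.val
  -- row-scaled matrix identity
  have hsum : ∑ j : Fin d, (c j).val = (∑ i : Fin d, i.val) + ∑ i, l.1 i := by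
    have h1 : ∑ j : Fin d, (c j).val = ∑ j : Fin d, (j.val + l.1 j.rev) :=
      Finset.sum_congr rfl fun j _ => hc j
    have h2 : ∑ j : Fin d, l.1 j.rev = ∑ j : Fin d, l.1 j :=
      Fintype.sum_bijective Fin.rev Fin.rev_bijective _ _ (fun j => rfl)
    rw [h1, Finset.sum_add_distrib, h2]
  have key : (X : Polynomial F) ^ (∑ i : Fin d, i.val) *
      (Matrix.of fun i j : Fin d =>
        (fun p => Polynomial.derivative p)^[i.val]
          ((Polynomial.X : Polynomial F) ^ (c j).val)).det
      = X ^ (∑ i : Fin d, i.val) * (C ((qval l : ℤ) : F) * X ^ (∑ i, l.1 i)) := by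
    rw [← Finset.prod_pow_eq_pow_sum]
    rw [← Matrix.det_mul_column (fun i : Fin d => (X : Polynomial F) ^ i.val)]
    have hM : (Matrix.of fun i j : Fin d => (X : Polynomial F) ^ i.val *
        (Matrix.of fun i j : Fin d =>
          (fun p => Polynomial.derivative p)^[i.val]
            ((Polynomial.X : Polynomial F) ^ (c j).val)) i j)
        = Matrix.of fun i j : Fin d => (X : Polynomial F) ^ (c j).val * C (a i j) := by
      ext i j
      simp only [Matrix.of_apply, hentry i j]
      rcases le_or_gt i.val (c j).val with h | h
      · rw [mul_comm (C (a i j)), ← mul_assoc, ← pow_add, Nat.add_sub_cancel' h]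
      · have : a i j = 0 := by
          simp only [ha, Matrix.of_apply]
          norm_cast
          exact Nat.descFactorial_eq_zero_iff_lt.2 h
        simp [this]
    rw [hM]
    rw [Matrix.det_mul_row (fun j : Fin d => (X : Polynomial F) ^ (c j).val) (fun i j => C (a i j))]
    have : (fun i j : Fin d => C (a i j)) = (C : F →+* Polynomial F).mapMatrix a := by
      ext i j; simp [RingHom.mapMatrix_apply, Matrix.map_apply]
    rw [this, ← RingHom.map_det, hdet_a, Finset.prod_pow_eq_pow_sum, hsum, pow_add]
    rw [Finset.prod_pow_eq_pow_sum]
    ring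
  have hX : (X : Polynomial F) ^ (∑ i : Fin d, i.val) ≠ 0 :=
    pow_ne_zero _ X_ne_zero
  exact mul_left_cancel₀ hX key
end

section
/- Let α ⊂ β be partitions with |β| = |α| + 2 such that the skew shape β/α consists of two boxes in distinct rows i₁ < i₂ and distinct columns. Let γ and γ' be the two intermediate partitions with α ⊂ γ, γ' ⊂ β and |γ| = |γ'| = |α| + 1. Then q_γ·q_{γ'} / (q_α·q_β) = 1 − 1/L², where L is the sum of the horizontal and vertical distances between the two boxes of β/α, and q_λ := Π_{1 ≤ i < j ≤ d} (k_j − k_i) with k_j = j + λ_{d+1-j}. -/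
lemma kval_lt {d n : ℕ} (l : RectPartition d n) {i j : Fin d} (h : i < j) :
    kval l i < kval l j := by
  have hr : j.rev ≤ i.rev := Fin.rev_le_rev.mpr h.le
  have h2 := l.2.1 j.rev i.rev hr
  have hv : i.val < j.val := h
  unfold kval
  omega


/-- Let `α ⊂ β` with `|β| = |α| + 2`, the two boxes of `β/α` lying in distinct rows
`i₁ < i₂` and distinct columns, and let `γ, γ'` be the two intermediate partitions.
Then `q_γ q_{γ'} / (q_α q_β) = 1 - 1/L²`, where `L` is the total of the horizontal and
vertical distances between the two boxes of `β/α`. -/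
theorem qval_ratio_eq_one_sub_inv_dist_sq (d n : ℕ) (hd : 0 < d) (hdn : d < n)
    (α β γ γ' : RectPartition d n) (i₁ i₂ : Fin d) (h12 : i₁ < i₂)
    (hb1 : β.1 i₁ = α.1 i₁ + 1) (hb2 : β.1 i₂ = α.1 i₂ + 1)
    (hother : ∀ i : Fin d, i ≠ i₁ → i ≠ i₂ → β.1 i = α.1 i)
    (hcol : β.1 i₁ ≠ β.1 i₂)
    (hγ : ∀ i : Fin d, γ.1 i = if i = i₁ then β.1 i else α.1 i)
    (hγ' : ∀ i : Fin d, γ'.1 i = if i = i₂ then β.1 i else α.1 i)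
    (L : ℕ)
    (hL : L = (i₂.val - i₁.val) + ((β.1 i₁ : ℤ) - (β.1 i₂ : ℤ)).natAbs) :
    ((qval γ * qval γ' : ℤ) : ℚ) / ((qval α * qval β : ℤ) : ℚ) = 1 - 1 / (L : ℚ) ^ 2 := by
  set j₁ := i₁.rev with hj₁
  set j₂ := i₂.rev with hj₂
  have hj : j₂ < j₁ := Fin.rev_lt_rev.mpr h12
  have hjne : j₁ ≠ j₂ := hj.ne'
  -- kval relations
  have hkγ : ∀ j, kval γ j = kval α j + (if j = j₁ then 1 else 0) := by
    intro j
    by_cases hc : j = j₁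
    · subst hc
      simp only [if_pos rfl]
      unfold kval
      rw [hγ, hj₁, Fin.rev_rev, if_pos rfl, hb1]
      push_cast; ring
    · rw [if_neg hc]
      unfold kval
      rw [hγ, if_neg, add_zero]
      intro h; exact hc (by rw [hj₁, ← h, Fin.rev_rev])
  have hkγ' : ∀ j, kval γ' j = kval α j + (if j = j₂ then 1 else 0) := by
    intro j
    by_cases hc : j = j₂
    · subst hc
      simp only [if_pos rfl]
      unfold kval
      rw [hγ', hj₂, Fin.rev_rev, if_pos rfl, hb2]
      push_cast; ring
    · rw [if_neg hc]
      unfold kval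
      rw [hγ', if_neg, add_zero]
      intro h; exact hc (by rw [hj₂, ← h, Fin.rev_rev])
  have hkβ : ∀ j, kval β j = kval α j + (if j = j₁ then 1 else 0) + (if j = j₂ then 1 else 0) := by
    intro j
    by_cases hc : j = j₁
    · subst hc
      rw [if_pos rfl, if_neg hjne]
      unfold kval
      rw [hj₁, Fin.rev_rev, hb1]
      push_cast; ring
    · by_cases hc2 : j = j₂
      · subst hc2
        rw [if_neg hc, if_pos rfl]
        unfold kval
        rw [hj₂, Fin.rev_rev, hb2]
        push_cast; ring
      · rw [if_neg hc, if_neg hc2, add_zero, add_zero]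
        unfold kval
        rw [hother]
        · intro h; exact hc (by rw [hj₁, ← h, Fin.rev_rev])
        · intro h; exact hc2 (by rw [hj₂, ← h, Fin.rev_rev])
  -- D = L
  have hβlt : β.1 i₂ < β.1 i₁ := by
    have := β.2.1 i₁ i₂ h12.le
    omega
  have hival : i₁.val < i₂.val := h12
  have hi2 : i₂.val < d := i₂.2
  have hDL : kval α j₁ - kval α j₂ = (L : ℤ) := by
    unfold kval
    rw [hj₁, hj₂, Fin.rev_rev, Fin.rev_rev, Fin.val_rev, Fin.val_rev]
    omega
  have hL2 : 2 ≤ L := by omega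
  have hLne : (L : ℚ) ≠ 0 := Nat.cast_ne_zero.mpr (by omega)
  -- main computation
  set S := Finset.univ.filter (fun p : Fin d × Fin d => p.1 < p.2) with hSdef
  have hmem : (j₂, j₁) ∈ S := by
    simp only [hSdef, Finset.mem_filter, Finset.mem_univ, true_and]
    exact hj
  have key : ∀ p ∈ S, p ≠ (j₂, j₁) →
      (kval γ p.2 - kval γ p.1) * (kval γ' p.2 - kval γ' p.1) =
      (kval α p.2 - kval α p.1) * (kval β p.2 - kval β p.1) := by
    intro p hp hne
    have hlt : p.1 < p.2 := by
      simp only [hSdef, Finset.mem_filter] at hp; exact hp.2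
    have hv : p.1.val < p.2.val := hlt
    have hjv : j₂.val < j₁.val := hj
    have hne'' : p.1.val ≠ j₂.val ∨ p.2.val ≠ j₁.val := by
      by_contra h
      push_neg at h
      exact hne (Prod.ext (Fin.ext h.1) (Fin.ext h.2))
    rw [hkγ, hkγ, hkγ', hkγ', hkβ, hkβ]
    simp only [Fin.ext_iff]
    split_ifs <;> first | ring1 | (exfalso; rcases hne'' with h | h <;> omega)
  have hq : ∀ l : RectPartition d n,
      ((qval l : ℤ) : ℚ) = ∏ p ∈ S, ((kval l p.2 - kval l p.1 : ℤ) : ℚ) := by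
    intro l
    unfold qval
    rw [← hSdef, Int.cast_prod]
  have hrest : ∀ b ∈ S, b ≠ (j₂, j₁) →
      ((kval γ b.2 - kval γ b.1 : ℤ) : ℚ) * ((kval γ' b.2 - kval γ' b.1 : ℤ) : ℚ) /
      (((kval α b.2 - kval α b.1 : ℤ) : ℚ) * ((kval β b.2 - kval β b.1 : ℤ) : ℚ)) = 1 := by
    intro b hb hbne
    have hlt : b.1 < b.2 := by
      simp only [hSdef, Finset.mem_filter] at hb; exact hb.2
    have h1 := kval_lt α hlt
    have h2 := kval_lt β hlt
    have hZW : (0:ℤ) < (kval α b.2 - kval α b.1) * (kval β b.2 - kval β b.1) :=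
      mul_pos (by omega) (by omega)
    have hk := key b hb hbne
    rw [← Int.cast_mul, ← Int.cast_mul, hk]
    exact div_self (Int.cast_ne_zero.mpr hZW.ne')
  rw [Int.cast_mul, Int.cast_mul, hq, hq, hq, hq, ← Finset.prod_mul_distrib,
    ← Finset.prod_mul_distrib, ← Finset.prod_div_distrib,
    Finset.prod_eq_single_of_mem (j₂, j₁) hmem hrest]
  have e1 : kval γ j₁ - kval γ j₂ = (L : ℤ) + 1 := by
    rw [hkγ j₁, hkγ j₂, if_pos rfl, if_neg hj.ne]; omega
  have e2 : kval γ' j₁ - kval γ' j₂ = (L : ℤ) - 1 := by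
    rw [hkγ' j₁, hkγ' j₂, if_neg hjne, if_pos rfl]; omega
  have e3 : kval β j₁ - kval β j₂ = (L : ℤ) := by
    rw [hkβ j₁, hkβ j₂, if_pos rfl, if_neg hjne, if_neg hj.ne, if_pos rfl]; omega
  simp only [e1, e2, e3, hDL]
  push_cast
  field_simp
  ring
end

section
/- Let Λ be the lattice of partitions in the d×(n-d) rectangle. Fix a skew shape λ/μ with μ ≤ λ in Λ, and nonzero field elements ω_b for each box b of λ/μ. Define Ω_ν := Π_{b ∉ ν} ω_b for μ ≤ ν ≤ λ (product over boxes of λ/μ outside ν) and Ω_ν := 0 otherwise. Then the tuple (Ω_ν)_{ν ∈ Λ} satisfies Ω_ν · Ω_{ν'} = Ω_{ν ∨ ν'} · Ω_{ν ∧ ν'} for all ν, ν' ∈ Λ. -/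
open scoped Classical

/-- A partition fitting in the `d × m` rectangle; `l i` is `λ_{i+1}`. -/
def RPart (d m : ℕ) :=
  {l : Fin d → ℕ // (∀ i j : Fin d, i ≤ j → l j ≤ l i) ∧ ∀ i, l i ≤ m}

/-- Componentwise meet (min). -/
def pmeet {d m : ℕ} (a b : RPart d m) : RPart d m :=
  ⟨fun i => min (a.1 i) (b.1 i),
    fun i j hij =>
      le_min ((min_le_left _ _).trans (a.2.1 i j hij)) ((min_le_right _ _).trans (b.2.1 i j hij)),
    fun i => min_le_of_left_le (a.2.2 i)⟩

/-- Componentwise join (max). -/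
def pjoin {d m : ℕ} (a b : RPart d m) : RPart d m :=
  ⟨fun i => max (a.1 i) (b.1 i),
    fun i j hij =>
      max_le ((a.2.1 i j hij).trans (le_max_left _ _)) ((b.2.1 i j hij).trans (le_max_right _ _)),
    fun i => max_le (a.2.2 i) (b.2.2 i)⟩

/-- `Ω_ν`: for `μ ≤ ν ≤ lam`, the product of the `ω`-values of the boxes of `lam/μ`
lying outside `ν`; and `0` otherwise.  The box in row `i` (0-based) and column `j`
(0-based) carries the value `ω (i, j)`. -/
noncomputable def Omega {F : Type*} [Field F] {d m : ℕ} (μ lam : RPart d m)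
    (ω : Fin d × ℕ → F) (ν : RPart d m) : F :=
  if (∀ i, μ.1 i ≤ ν.1 i) ∧ (∀ i, ν.1 i ≤ lam.1 i) then
    ∏ i : Fin d, ∏ j ∈ Finset.Ico (ν.1 i) (lam.1 i), ω (i, j)
  else 0

/-- For nonzero `ω`-values on the boxes of the skew shape `lam/μ`, the tuple
`(Ω_ν)_ν` satisfies `Ω_ν Ω_{ν'} = Ω_{ν ∨ ν'} Ω_{ν ∧ ν'}` for all partitions `ν, ν'`
in the `d × m` rectangle. -/
theorem Omega_GT_relations {F : Type*} [Field F] (d m : ℕ) (μ lam : RPart d m)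
    (hμlam : ∀ i, μ.1 i ≤ lam.1 i) (ω : Fin d × ℕ → F)
    (hω : ∀ i : Fin d, ∀ j : ℕ, μ.1 i ≤ j → j < lam.1 i → ω (i, j) ≠ 0) :
    ∀ ν ν' : RPart d m,
      Omega μ lam ω ν * Omega μ lam ω ν' =
        Omega μ lam ω (pjoin ν ν') * Omega μ lam ω (pmeet ν ν') := by
  intro ν ν'
  by_cases h1 : (∀ i, μ.1 i ≤ ν.1 i) ∧ (∀ i, ν.1 i ≤ lam.1 i)
  · by_cases h2 : (∀ i, μ.1 i ≤ ν'.1 i) ∧ (∀ i, ν'.1 i ≤ lam.1 i)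
    · have hj : (∀ i, μ.1 i ≤ (pjoin ν ν').1 i) ∧ ∀ i, (pjoin ν ν').1 i ≤ lam.1 i :=
        ⟨fun i => (h1.1 i).trans (le_max_left _ _), fun i => max_le (h1.2 i) (h2.2 i)⟩
      have hm : (∀ i, μ.1 i ≤ (pmeet ν ν').1 i) ∧ ∀ i, (pmeet ν ν').1 i ≤ lam.1 i :=
        ⟨fun i => le_min (h1.1 i) (h2.1 i), fun i => (min_le_left _ _).trans (h1.2 i)⟩
      simp only [Omega, if_pos h1, if_pos h2, if_pos hj, if_pos hm]
      rw [← Finset.prod_mul_distrib, ← Finset.prod_mul_distrib]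
      refine Finset.prod_congr rfl fun i _ => ?_
      show (∏ j ∈ Finset.Ico (ν.1 i) (lam.1 i), ω (i, j)) *
          ∏ j ∈ Finset.Ico (ν'.1 i) (lam.1 i), ω (i, j) =
          (∏ j ∈ Finset.Ico (max (ν.1 i) (ν'.1 i)) (lam.1 i), ω (i, j)) *
          ∏ j ∈ Finset.Ico (min (ν.1 i) (ν'.1 i)) (lam.1 i), ω (i, j)
      rcases le_total (ν.1 i) (ν'.1 i) with h | h
      · rw [max_eq_right h, min_eq_left h, mul_comm]
      · rw [max_eq_left h, min_eq_right h]
    · have : ¬((∀ i, μ.1 i ≤ (pjoin ν ν').1 i) ∧ ∀ i, (pjoin ν ν').1 i ≤ lam.1 i) ∨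
          ¬((∀ i, μ.1 i ≤ (pmeet ν ν').1 i) ∧ ∀ i, (pmeet ν ν').1 i ≤ lam.1 i) := by
        by_contra hc
        push_neg at hc
        exact h2 ⟨fun i => (hc.2.1 i).trans (min_le_right _ _),
          fun i => (le_max_right (ν.1 i) (ν'.1 i)).trans (hc.1.2 i)⟩
      rcases this with h | h <;> simp [Omega, if_neg h, if_neg h2]
  · have : ¬((∀ i, μ.1 i ≤ (pjoin ν ν').1 i) ∧ ∀ i, (pjoin ν ν').1 i ≤ lam.1 i) ∨
        ¬((∀ i, μ.1 i ≤ (pmeet ν ν').1 i) ∧ ∀ i, (pmeet ν ν').1 i ≤ lam.1 i) := by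
      by_contra hc
      push_neg at hc
      exact h1 ⟨fun i => (hc.2.1 i).trans (min_le_left _ _),
        fun i => (le_max_left (ν.1 i) (ν'.1 i)).trans (hc.1.2 i)⟩
    rcases this with h | h <;> simp [Omega, if_neg h, if_neg h1]
end
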